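/- The LIKE mechanism is not bounded envy-free ex-post: for the instance with 2 agents who both have utility 1 for all m items and bid truthfully, the outcome in which agent 1 receives all m items occurs with probability (1/2)^m > 0, and in this outcome agent 2's utility for agent 1's allocation exceeds her utility for her own (empty) allocation by m, i.e., u_2(A_1) − u_2(A_2) = m. Consequently, for every constant c there exists m and an outcome of positive probability in which u_2(A_1) − u_2(A_2) > c. -/
import Mathlib


open Finset

attribute [local instance] Classical.propDecidable

noncomputable section

/-- Probability of the allocation decision `a k` for item `k` under the LIKE mechanism:
if nobody bids the item stays unallocated; otherwise it goes uniformly at random to one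
of the bidders `B k`. -/
def likeStepProb {n m : ℕ} (B : Fin m → Finset (Fin n))
    (a : Fin m → Option (Fin n)) (k : Fin m) : ℝ :=
  if B k = ∅ then (if a k = none then 1 else 0)
  else
    match a k with
    | none => 0
    | some j => if j ∈ B k then 1 / (B k).card else 0

/-- Probability of the full outcome `a` under the LIKE mechanism (items are allocated
independently). -/
def likeProb {n m : ℕ} (B : Fin m → Finset (Fin n))
    (a : Fin m → Option (Fin n)) : ℝ :=
  ∏ k, likeStepProb B a k

/-- Realized utility, w.r.t. the utility function `u`, of agent `j`'s bundle in outcome `a`. -/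
def realizedUtil {n m : ℕ} (u : Fin m → ℝ) (a : Fin m → Option (Fin n)) (j : Fin n) : ℝ :=
  ∑ k, if a k = some j then u k else 0

lemma key (m : ℕ) :
    likeProb (fun _ : Fin m => (Finset.univ : Finset (Fin 2)))
        (fun _ : Fin m => (some 0 : Option (Fin 2))) = (1 / 2 : ℝ) ^ m := by
  unfold likeProb likeStepProb
  simp [Finset.univ_nonempty.ne_empty, Finset.card_univ]

lemma keyU (m : ℕ) :
    realizedUtil (fun _ : Fin m => (1 : ℝ)) (fun _ : Fin m => (some 0 : Option (Fin 2))) 0 -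
        realizedUtil (fun _ : Fin m => (1 : ℝ)) (fun _ : Fin m => (some 0 : Option (Fin 2))) 1 = m := by
  unfold realizedUtil
  simp

/-- **The LIKE mechanism is not bounded envy-free ex-post.**
Take 2 agents who both have utility `1` for all `m` items and bid truthfully (so every
item's bidder set is `{1, 2}`).  The outcome in which agent 1 receives all `m` items
occurs with probability `(1/2)^m > 0`, and in this outcome agent 2's utility for agent
1's allocation exceeds her utility for her own (empty) allocation by `m`.  Consequently,
for every constant `c` there exist `m` and an outcome of positive probability in which
`u_2(A_1) − u_2(A_2) > c`. -/
theorem like_not_boundedEnvyFree_exPost :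
    (∀ m : ℕ,
      likeProb (fun _ : Fin m => (Finset.univ : Finset (Fin 2)))
          (fun _ : Fin m => (some 0 : Option (Fin 2))) = (1 / 2 : ℝ) ^ m ∧
      (0 : ℝ) < (1 / 2 : ℝ) ^ m ∧
      realizedUtil (fun _ : Fin m => (1 : ℝ)) (fun _ : Fin m => (some 0 : Option (Fin 2))) 0 -
          realizedUtil (fun _ : Fin m => (1 : ℝ)) (fun _ : Fin m => (some 0 : Option (Fin 2))) 1 = m) ∧
    (∀ c : ℝ, ∃ m : ℕ, ∃ a : Fin m → Option (Fin 2),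
      0 < likeProb (fun _ : Fin m => (Finset.univ : Finset (Fin 2))) a ∧
      realizedUtil (fun _ : Fin m => (1 : ℝ)) a 0 -
          realizedUtil (fun _ : Fin m => (1 : ℝ)) a 1 > c) := by
  constructor
  · intro m
    exact ⟨key m, by positivity, keyU m⟩
  · intro c
    obtain ⟨m, hm⟩ := exists_nat_gt c
    refine ⟨m, fun _ => some 0, ?_, ?_⟩
    · rw [key m]; positivity
    · rw [keyU m]; exact hm

end
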